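/- Every (bull, P5)-free graph is AT-free; in particular every (bull, 2K2)-free graph is AT-free. -/

import Mathlib

open SimpleGraph

variable {V : Type*}

/-- The bull: a triangle 0,1,2 with pendant vertices 3 (adjacent to 0) and 4 (adjacent to 1). -/
def bullGraph : SimpleGraph (Fin 5) :=
  SimpleGraph.fromRel (fun i j =>
    (i = 0 ∧ j = 1) ∨ (i = 0 ∧ j = 2) ∨ (i = 1 ∧ j = 2) ∨ (i = 0 ∧ j = 3) ∨ (i = 1 ∧ j = 4))

/-- The graph consisting of two independent edges: 0-1 and 2-3. -/
def twoK2 : SimpleGraph (Fin 4) :=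
  SimpleGraph.fromRel (fun i j => (i = 0 ∧ j = 1) ∨ (i = 2 ∧ j = 3))

/-- `G` has no induced subgraph isomorphic to `H`. -/
def IndFree {W : Type*} (H : SimpleGraph W) (G : SimpleGraph V) : Prop :=
  IsEmpty (H ↪g G)

/-- A graph is chordal if it has no induced cycle of length at least 4. -/
def Chordal (G : SimpleGraph V) : Prop :=
  ∀ n : ℕ, 4 ≤ n → IndFree (cycleGraph n) G

/-- A cap on a hole of length `n`: a cycle on `ZMod n` together with an extra vertex
adjacent to exactly the two adjacent hole vertices `0` and `1`. -/
def capGraph (n : ℕ) : SimpleGraph (Option (ZMod n)) :=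
  SimpleGraph.fromRel (fun a b =>
    match a, b with
    | some i, some j => j = i + 1
    | none, some i => i = 0 ∨ i = 1
    | _, _ => False)

/-- `x` dominates `y`: they are adjacent and every neighbour of `y` other than `x`
is a neighbour of `x`. -/
def Dominates (G : SimpleGraph V) (x y : V) : Prop :=
  G.Adj x y ∧ ∀ z, G.Adj y z → z ≠ x → G.Adj x z

/-- A graph is reducible if some vertex dominates an adjacent vertex. -/
def Reducible (G : SimpleGraph V) : Prop :=
  ∃ x y, Dominates G x y

/-- Two adjacent vertices with the same neighbours other than each other. -/
def TrueTwins (G : SimpleGraph V) (x y : V) : Prop :=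
  G.Adj x y ∧ ∀ z, z ≠ x → z ≠ y → (G.Adj x z ↔ G.Adj y z)

/-- A vertex is simplicial if its neighbourhood induces a clique. -/
def Simplicial (G : SimpleGraph V) (v : V) : Prop :=
  G.IsClique (G.neighborSet v)

/-- A universal vertex is adjacent to all other vertices. -/
def Universal (G : SimpleGraph V) (v : V) : Prop :=
  ∀ w, w ≠ v → G.Adj v w

/-- A graph is biconnected if it is connected and remains connected after
deleting any single vertex. -/
def Biconnected (G : SimpleGraph V) : Prop :=
  G.Connected ∧ ∀ v : V, (G.induce ({v}ᶜ : Set V)).Connected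

/-- A basic (cap-free) graph: a chordal graph, or a biconnected triangle-free graph
together with at most one additional vertex adjacent to all other vertices. -/
def IsBasic (G : SimpleGraph V) : Prop :=
  Chordal G ∨ (Biconnected G ∧ G.CliqueFree 3) ∨
    (∃ v : V, Universal G v ∧ Biconnected (G.induce ({v}ᶜ : Set V)) ∧
      (G.induce ({v}ᶜ : Set V)).CliqueFree 3)

/-- A one-point cutset: a vertex whose removal disconnects the graph. -/
def IsCutVertex (G : SimpleGraph V) (v : V) : Prop :=
  ¬ (G.induce ({v}ᶜ : Set V)).Connected

/-- `C` is (the vertex set of) a connected component of `G - v`. -/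
def IsComponentOf (G : SimpleGraph V) (v : V) (C : Set V) : Prop :=
  v ∉ C ∧ C.Nonempty ∧ (G.induce C).Connected ∧
    ∀ x ∈ C, ∀ y, G.Adj x y → y ≠ v → y ∈ C

/-- An amalgam partition `(K, A1, B1, A2, B2)` of `G`. -/
structure IsAmalgamPartition (G : SimpleGraph V) (K A1 B1 A2 B2 : Set V) : Prop where
  partition : ∀ v : V, (v ∈ K ∧ v ∉ A1 ∧ v ∉ B1 ∧ v ∉ A2 ∧ v ∉ B2) ∨
    (v ∉ K ∧ v ∈ A1 ∧ v ∉ B1 ∧ v ∉ A2 ∧ v ∉ B2) ∨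
    (v ∉ K ∧ v ∉ A1 ∧ v ∈ B1 ∧ v ∉ A2 ∧ v ∉ B2) ∨
    (v ∉ K ∧ v ∉ A1 ∧ v ∉ B1 ∧ v ∈ A2 ∧ v ∉ B2) ∨
    (v ∉ K ∧ v ∉ A1 ∧ v ∉ B1 ∧ v ∉ A2 ∧ v ∈ B2)
  A1_nonempty : A1.Nonempty
  A2_nonempty : A2.Nonempty
  K_clique : G.IsClique K
  side1_big : 2 ≤ (A1 ∪ B1).ncard
  side2_big : 2 ≤ (A2 ∪ B2).ncard
  A1A2_complete : ∀ a1 ∈ A1, ∀ a2 ∈ A2, G.Adj a1 a2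
  KA1_complete : ∀ k ∈ K, ∀ a ∈ A1, G.Adj k a
  KA2_complete : ∀ k ∈ K, ∀ a ∈ A2, G.Adj k a
  B1_sep : ∀ b ∈ B1, ∀ x ∈ A2 ∪ B2, ¬ G.Adj b x
  B2_sep : ∀ b ∈ B2, ∀ x ∈ A1 ∪ B1, ¬ G.Adj b x

/-- A clique cover of `G`: a finite family of cliques covering all vertices. -/
def IsCliqueCover (G : SimpleGraph V) (𝒞 : Finset (Set V)) : Prop :=
  (∀ s ∈ 𝒞, G.IsClique s) ∧ ∀ v : V, ∃ s ∈ 𝒞, v ∈ s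

/-- The clique cover number `θ(G)`. -/
noncomputable def cliqueCoverNumber (G : SimpleGraph V) : ℕ :=
  sInf {n : ℕ | ∃ 𝒞 : Finset (Set V), IsCliqueCover G 𝒞 ∧ 𝒞.card = n}

/-- A matching of `G`: a finite set of edges, pairwise vertex-disjoint. -/
def IsMatching' (G : SimpleGraph V) (M : Finset (Sym2 V)) : Prop :=
  (↑M : Set (Sym2 V)) ⊆ G.edgeSet ∧
    ∀ e ∈ M, ∀ f ∈ M, e ≠ f → ∀ v : V, v ∈ e → v ∉ f

/-- The maximum size `m(G)` of a matching of `G`. -/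
noncomputable def matchingNumber (G : SimpleGraph V) : ℕ :=
  sSup {n : ℕ | ∃ M : Finset (Sym2 V), IsMatching' G M ∧ M.card = n}

/-- An asteroidal triple: a stable triple such that between any two of its vertices
there is a path avoiding the closed neighbourhood of the third. -/
def IsAT (G : SimpleGraph V) (x y z : V) : Prop :=
  x ≠ y ∧ y ≠ z ∧ x ≠ z ∧ ¬ G.Adj x y ∧ ¬ G.Adj y z ∧ ¬ G.Adj x z ∧
    (∃ p : G.Walk x y, ∀ w ∈ p.support, w ≠ z ∧ ¬ G.Adj z w) ∧
    (∃ p : G.Walk y z, ∀ w ∈ p.support, w ≠ x ∧ ¬ G.Adj x w) ∧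
    (∃ p : G.Walk x z, ∀ w ∈ p.support, w ≠ y ∧ ¬ G.Adj y w)

def ATFree (G : SimpleGraph V) : Prop := ¬ ∃ x y z : V, IsAT G x y z

section ATAux

variable {G : SimpleGraph V}

private def tkEmb : twoK2 ↪g SimpleGraph.pathGraph 5 where
  toFun := ![0, 1, 3, 4]
  inj' := by decide
  map_rel_iff' := by
    intro i j
    fin_cases i <;> fin_cases j <;>
      simp [twoK2, pathGraph_adj, SimpleGraph.fromRel] <;> decide

private lemma hasP5 (hfree : IndFree (SimpleGraph.pathGraph 5) G) (v0 v1 v2 v3 v4 : V)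
    (h01 : G.Adj v0 v1) (h12 : G.Adj v1 v2) (h23 : G.Adj v2 v3) (h34 : G.Adj v3 v4)
    (h02 : ¬ G.Adj v0 v2) (h03 : ¬ G.Adj v0 v3) (h04 : ¬ G.Adj v0 v4)
    (h13 : ¬ G.Adj v1 v3) (h14 : ¬ G.Adj v1 v4) (h24 : ¬ G.Adj v2 v4) : False := by
  have n02 : v0 ≠ v2 := fun h => h03 (h ▸ h23)
  have n03 : v0 ≠ v3 := fun h => h04 (h ▸ h34)
  have n04 : v0 ≠ v4 := fun h => h14 (h ▸ h01.symm)
  have n13 : v1 ≠ v3 := fun h => h03 (h ▸ h01)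
  have n14 : v1 ≠ v4 := fun h => h04 (h ▸ h01)
  have n24 : v2 ≠ v4 := fun h => h14 (h ▸ h12)
  have s02 : ¬ G.Adj v2 v0 := fun h => h02 h.symm
  have s03 : ¬ G.Adj v3 v0 := fun h => h03 h.symm
  have s04 : ¬ G.Adj v4 v0 := fun h => h04 h.symm
  have s13 : ¬ G.Adj v3 v1 := fun h => h13 h.symm
  have s14 : ¬ G.Adj v4 v1 := fun h => h14 h.symm
  have s24 : ¬ G.Adj v4 v2 := fun h => h24 h.symm
  refine hfree.elim ⟨⟨![v0, v1, v2, v3, v4], ?_⟩, ?_⟩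
  · intro i j hij
    fin_cases i <;> fin_cases j <;> simp_all
  · intro i j
    show G.Adj (![v0, v1, v2, v3, v4] i) (![v0, v1, v2, v3, v4] j) ↔ _
    simp only [pathGraph_adj]
    fin_cases i <;> fin_cases j <;>
      simp [Function.Embedding.coeFn_mk, h01, h12, h23, h34, h02, h03, h04, h13, h14, h24,
        h01.symm, h12.symm, h23.symm, h34.symm, G.irrefl,
        s02, s03, s04, s13, s14, s24]

/-- triangle t0 t1 t2, pendant p0 at t0, pendant p1 at t1 -/
private lemma hasBull (hfree : IndFree bullGraph G) (t0 t1 t2 p0 p1 : V)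
    (h01 : G.Adj t0 t1) (h02 : G.Adj t0 t2) (h12 : G.Adj t1 t2)
    (h03 : G.Adj t0 p0) (h14 : G.Adj t1 p1)
    (h04 : ¬ G.Adj t0 p1) (h13 : ¬ G.Adj t1 p0)
    (h23 : ¬ G.Adj t2 p0) (h24 : ¬ G.Adj t2 p1) (h34 : ¬ G.Adj p0 p1) : False := by
  have n03 : t0 ≠ p0 := h03.ne
  have n13 : t1 ≠ p0 := fun h => h23 (h ▸ h12.symm)
  have n23 : t2 ≠ p0 := fun h => h13 (h ▸ h12)
  have n04 : t0 ≠ p1 := fun h => h24 (h ▸ h02.symm)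
  have n14 : t1 ≠ p1 := h14.ne
  have n24 : t2 ≠ p1 := fun h => h04 (h ▸ h02)
  have n34 : p0 ≠ p1 := fun h => h04 (h ▸ h03)
  have s04 : ¬ G.Adj p1 t0 := fun h => h04 h.symm
  have s13 : ¬ G.Adj p0 t1 := fun h => h13 h.symm
  have s23 : ¬ G.Adj p0 t2 := fun h => h23 h.symm
  have s24 : ¬ G.Adj p1 t2 := fun h => h24 h.symm
  have s34 : ¬ G.Adj p1 p0 := fun h => h34 h.symm
  refine hfree.elim ⟨⟨![t0, t1, t2, p0, p1], ?_⟩, ?_⟩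
  · intro i j hij
    fin_cases i <;> fin_cases j <;> simp_all
  · intro i j
    show G.Adj (![t0, t1, t2, p0, p1] i) (![t0, t1, t2, p0, p1] j) ↔ _
    fin_cases i <;> fin_cases j <;>
      simp [Function.Embedding.coeFn_mk, bullGraph, SimpleGraph.fromRel_adj,
        h01, h02, h12, h03, h14, h04, h13, h23, h24, h34,
        h01.symm, h02.symm, h12.symm, h03.symm, h14.symm, G.irrefl,
        s04, s13, s23, s24, s34]

/-- In a `P5`-free graph, a walk inside `S` between nonadjacent vertices yields a short
induced connection inside `S`. -/
private lemma short_path (hP5 : IndFree (SimpleGraph.pathGraph 5) G) (S : Set V) :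
    ∀ n (x y : V), ∀ p : G.Walk x y, p.length ≤ n → (∀ w ∈ p.support, w ∈ S) →
    ¬ G.Adj x y → x ≠ y →
    (∃ a, a ∈ S ∧ G.Adj x a ∧ G.Adj a y) ∨
    (∃ a b, a ∈ S ∧ b ∈ S ∧ G.Adj x a ∧ G.Adj a b ∧ G.Adj b y ∧
      ¬ G.Adj x b ∧ ¬ G.Adj a y) := by
  intro n
  induction n with
  | zero =>
    intro x y p hl _ _ hne
    exact absurd (SimpleGraph.Walk.eq_of_length_eq_zero (Nat.le_zero.mp hl)) hne
  | succ n ih =>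
    intro x y p hl hsup hxy hne
    cases p with
    | nil => exact absurd rfl hne
    | cons h q =>
      rename_i a
      have haS : a ∈ S := hsup a (by simp [SimpleGraph.Walk.support_cons])
      have hqsup : ∀ w ∈ q.support, w ∈ S := fun w hw =>
        hsup w (by simp [SimpleGraph.Walk.support_cons, hw])
      by_cases hay : G.Adj a y
      · exact Or.inl ⟨a, haS, h, hay⟩
      · have hane : a ≠ y := by
          rintro rfl; exact hxy h
        have hql : q.length ≤ n := by
          simpa [SimpleGraph.Walk.length_cons] using hl
        rcases ih a y q hql hqsup hay hane with ⟨b, hbS, hab, hby⟩ |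
          ⟨b, c, hbS, hcS, hab, hbc, hcy, hac, hby⟩
        · by_cases hxb : G.Adj x b
          · exact Or.inl ⟨b, hbS, hxb, hby⟩
          · exact Or.inr ⟨a, b, haS, hbS, h, hab, hby, hxb, hay⟩
        · by_cases hxc : G.Adj x c
          · exact Or.inl ⟨c, hcS, hxc, hcy⟩
          · by_cases hxb : G.Adj x b
            · exact Or.inr ⟨b, c, hbS, hcS, hxb, hbc, hcy, hxc, hby⟩
            · exact absurd (hasP5 hP5 x a b c y h hab hbc hcy hxb hxc hxy hac hay hby) id

/-- Two length-2 avoiding paths sharing the middle endpoint `y`. -/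
private lemma case22 (hB : IndFree bullGraph G) (hP : IndFree (SimpleGraph.pathGraph 5) G)
    (x y z a e : V)
    (hxy : ¬ G.Adj x y) (hyz : ¬ G.Adj y z) (hxz : ¬ G.Adj x z)
    (hza : ¬ G.Adj z a) (hxe : ¬ G.Adj x e)
    (hxa : G.Adj x a) (hay : G.Adj a y) (hye : G.Adj y e) (hez : G.Adj e z) : False := by
  have hae : ¬ G.Adj a z := fun h => hza h.symm
  by_cases h : G.Adj a e
  · exact hasBull hB a e y x z h hay hye.symm hxa.symm hez
      hae (fun hh => hxe hh.symm) (fun hh => hxy hh.symm) hyz hxz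
  · exact hasP5 hP x a y e z hxa hay hye hez hxy (fun hh => hxe hh) hxz h hae
      (fun hh => hyz hh)

/-- Two length-3 avoiding paths sharing the middle endpoint `y`. -/
private lemma case33 (hB : IndFree bullGraph G) (hP : IndFree (SimpleGraph.pathGraph 5) G)
    (x y z a b e f : V)
    (hxy : ¬ G.Adj x y) (hyz : ¬ G.Adj y z) (hxz : ¬ G.Adj x z)
    (hza : ¬ G.Adj z a) (hzb : ¬ G.Adj z b)
    (hxe : ¬ G.Adj x e) (hxf : ¬ G.Adj x f)
    (hxa : G.Adj x a) (hab : G.Adj a b) (hby : G.Adj b y)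
    (hxb : ¬ G.Adj x b) (hay : ¬ G.Adj a y)
    (hye : G.Adj y e) (hef : G.Adj e f) (hfz : G.Adj f z)
    (hyf : ¬ G.Adj y f) (hez : ¬ G.Adj e z) : False := by
  by_cases haf : G.Adj a f <;> by_cases hbf : G.Adj b f
  · exact hasBull hB a b f x y hab haf hbf hxa.symm hby
      hay (fun h => hxb h.symm) (fun h => hxf h.symm) (fun h => hyf h.symm) hxy
  · exact hasP5 hP z f a b y hfz.symm haf.symm hab hby
      hza hzb (fun h => hyz h.symm) (fun h => hbf h.symm) (fun h => hyf h.symm) hay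
  · exact hasP5 hP x a b f z hxa hab hbf hfz
      hxb hxf hxz haf (fun h => hza h.symm) (fun h => hzb h.symm)
  · by_cases hae : G.Adj a e
    · exact hasP5 hP z f e a x hfz.symm hef.symm hae.symm hxa.symm
        (fun h => hez h.symm) hza (fun h => hxz h.symm)
        (fun h => haf h.symm) (fun h => hxf h.symm) (fun h => hxe h.symm)
    · by_cases hbe : G.Adj b e
      · exact hasBull hB b e y a f hbe hby hye.symm hab.symm hef
          hbf (fun h => hae h.symm) (fun h => hay h.symm) hyf haf
      · exact hasP5 hP x a b y e hxa hab hby hye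
          hxb hxy hxe hay hae hbe

private lemma bullP5_ATFree (hB : IndFree bullGraph G)
    (hP : IndFree (SimpleGraph.pathGraph 5) G) : ATFree G := by
  rintro ⟨x, y, z, hnxy, hnyz, hnxz, hxy, hyz, hxz,
    ⟨p1, hp1⟩, ⟨p2, hp2⟩, ⟨p3, hp3⟩⟩
  have Pxy := short_path hP {w | w ≠ z ∧ ¬ G.Adj z w} p1.length x y p1 le_rfl
    (fun w hw => hp1 w hw) hxy hnxy
  have Pyz := short_path hP {w | w ≠ x ∧ ¬ G.Adj x w} p2.length y z p2 le_rfl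
    (fun w hw => hp2 w hw) hyz hnyz
  have Pxz := short_path hP {w | w ≠ y ∧ ¬ G.Adj y w} p3.length x z p3 le_rfl
    (fun w hw => hp3 w hw) hxz hnxz
  have sxy : ¬ G.Adj y x := fun h => hxy h.symm
  have syz : ¬ G.Adj z y := fun h => hyz h.symm
  have sxz : ¬ G.Adj z x := fun h => hxz h.symm
  rcases Pxy with ⟨a, haS, hxa, hay⟩ | ⟨a, b, haS, hbS, hxa, hab, hby, hxb, hay⟩
  · rcases Pyz with ⟨e, heS, hye, hez⟩ | ⟨e, f, heS, hfS, hye, hef, hfz, hyf, hez⟩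
    · -- 2 & 2 at y
      exact case22 hB hP x y z a e hxy hyz hxz haS.2 heS.2 hxa hay hye hez
    · rcases Pxz with ⟨c, hcS, hxc, hcz⟩ | ⟨c, d, hcS, hdS, hxc, hcd, hdz, hxd, hcz⟩
      · -- Pxy 2 & Pxz 2 at x
        exact case22 hB hP y x z a c sxy hxz hyz haS.2 hcS.2 hay.symm hxa.symm hxc hcz
      · -- Pyz 3 & Pxz 3 at z
        exact case33 hB hP y z x e f d c hyz sxz sxy heS.2 hfS.2 hdS.2 hcS.2
          hye hef hfz hyf hez hdz.symm hcd.symm hxc.symm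
          (fun h => hcz h.symm) (fun h => hxd h.symm)
  · rcases Pyz with ⟨e, heS, hye, hez⟩ | ⟨e, f, heS, hfS, hye, hef, hfz, hyf, hez⟩
    · rcases Pxz with ⟨c, hcS, hxc, hcz⟩ | ⟨c, d, hcS, hdS, hxc, hcd, hdz, hxd, hcz⟩
      · -- Pyz 2 & Pxz 2 at z
        exact case22 hB hP y z x e c hyz sxz sxy heS.2 hcS.2 hye hez hcz.symm hxc.symm
      · -- Pxy 3 & Pxz 3 at x
        exact case33 hB hP y x z b a c d sxy hxz hyz hbS.2 haS.2 hcS.2 hdS.2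
          hby.symm hab.symm hxa.symm (fun h => hay h.symm) (fun h => hxb h.symm)
          hxc hcd hdz hxd hcz
    · -- Pxy 3 & Pyz 3 at y
      exact case33 hB hP x y z a b e f hxy hyz hxz haS.2 hbS.2 heS.2 hfS.2
        hxa hab hby hxb hay hye hef hfz hyf hez

end ATAux

/-- every (bull, P5)-free graph is AT-free; in particular every
(bull, 2K2)-free graph is AT-free. -/
theorem stmt19 (G : SimpleGraph V) :
    (IndFree bullGraph G → IndFree (SimpleGraph.pathGraph 5) G → ATFree G) ∧
    (IndFree bullGraph G → IndFree twoK2 G → ATFree G) := by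
  refine ⟨fun hB hP => bullP5_ATFree hB hP, fun hB hK => bullP5_ATFree hB ?_⟩
  exact ⟨fun e => hK.elim (e.comp tkEmb)⟩
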